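/- Let g ≥ 3, let H be the 𝔽₂-vector space with basis images of f₁,…,f_{2g+1} subject to f₁+⋯+f_{2g+1}=0, with S_{2g+1} permuting the fᵢ. Then the space of S_{2g+1}-invariant 𝔽₂-linear maps ψ : H^{⊗3} → 𝔽₂ is one-dimensional, spanned by the map ψ with ψ(f_i⊗f_j⊗f_k) = 0 if i,j,k are pairwise distinct or i=j=k, and ψ(f_i⊗f_j⊗f_k) = 1 otherwise (exactly two of the indices equal). -/
import Mathlib


open Finset

/-- Exactly two of the three indices coincide. -/
def exactlyTwo {n : ℕ} (i j k : Fin n) : Prop :=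
  (i = j ∧ i ≠ k) ∨ (i = k ∧ i ≠ j) ∨ (j = k ∧ i ≠ j)

instance {n : ℕ} (i j k : Fin n) : Decidable (exactlyTwo i j k) := by
  unfold exactlyTwo; infer_instance

/-- The trilinear form on the permutation module with `ψ₀(f_i⊗f_j⊗f_k) = 1` iff exactly two
of `i, j, k` coincide. -/
def psi0 {n : ℕ} (x y z : Fin n → ZMod 2) : ZMod 2 :=
  ∑ i, ∑ j, ∑ k, if exactlyTwo i j k then x i * y j * z k else 0

/-- A trilinear map `ψ` on `V^{⊗3}` (for `V` the permutation module on `f₁,…,f_{2g+1}`)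
descending to `H^{⊗3}` (i.e. killing the all-ones vector, which is the relation
`f₁+⋯+f_{2g+1}`, in each slot). -/
def IsInvTrilinear (n : ℕ) (ψ : (Fin n → ZMod 2) → (Fin n → ZMod 2) → (Fin n → ZMod 2) → ZMod 2) : Prop :=
  (∀ x x' y z, ψ (x + x') y z = ψ x y z + ψ x' y z) ∧
  (∀ x y y' z, ψ x (y + y') z = ψ x y z + ψ x y' z) ∧
  (∀ x y z z', ψ x y (z + z') = ψ x y z + ψ x y z') ∧
  (ψ (fun _ => 1) = fun _ _ => 0) ∧
  (∀ x z, ψ x (fun _ => 1) z = 0) ∧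
  (∀ x y, ψ x y (fun _ => 1) = 0) ∧
  (∀ (σ : Equiv.Perm (Fin n)) x y z, ψ (x ∘ σ) (y ∘ σ) (z ∘ σ) = ψ x y z)

section Aux
variable {n : ℕ}

lemma two_cases (c : ZMod 2) : c = 0 ∨ c = 1 := by revert c; decide

lemma exactlyTwo_iff1 (i j k : Fin n) :
    exactlyTwo i j k ↔ (if j = k then i ≠ j else (i = j ∨ i = k)) := by
  unfold exactlyTwo; split_ifs with h <;> subst_eqs <;> aesop

lemma exactlyTwo_iff2 (i j k : Fin n) :
    exactlyTwo i j k ↔ (if i = k then j ≠ i else (j = i ∨ j = k)) := by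
  unfold exactlyTwo; split_ifs with h <;> subst_eqs <;> aesop

lemma exactlyTwo_iff3 (i j k : Fin n) :
    exactlyTwo i j k ↔ (if i = j then k ≠ i else (k = i ∨ k = j)) := by
  unfold exactlyTwo; split_ifs with h <;> subst_eqs <;> aesop

lemma sum_ite_one (hcast : ((n : ℕ) : ZMod 2) = 1) (a : Fin n) (A C : ZMod 2) :
    ∑ i : Fin n, (if i = a then A else C) = A := by
  have key : ∀ i : Fin n, (if i = a then A else C)
      = (if i = a then A + C else 0) + C := by
    intro i; split_ifs with h
    · rw [add_assoc, CharTwo.add_self_eq_zero, add_zero]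
    · rw [zero_add]
  rw [Finset.sum_congr rfl fun i _ => key i, Finset.sum_add_distrib,
    Finset.sum_ite_eq' Finset.univ a (fun _ => A + C), Finset.sum_const,
    Finset.card_univ, Fintype.card_fin, nsmul_eq_mul, hcast, one_mul]
  simp [add_assoc, CharTwo.add_self_eq_zero]

lemma sum_ite_two (hcast : ((n : ℕ) : ZMod 2) = 1) (a b : Fin n) (hab : a ≠ b)
    (A B C : ZMod 2) :
    ∑ i : Fin n, (if i = a then A else if i = b then B else C) = A + B + C := by
  have key : ∀ i : Fin n, (if i = a then A else if i = b then B else C)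
      = (if i = a then A + C else 0) + ((if i = b then B + C else 0) + C) := by
    intro i; split_ifs with h1 h2
    · exact absurd (h1 ▸ h2) hab
    · rw [zero_add, add_assoc, CharTwo.add_self_eq_zero, add_zero]
    · rw [zero_add, add_assoc, CharTwo.add_self_eq_zero, add_zero]
    · rw [zero_add, zero_add]
  rw [Finset.sum_congr rfl fun i _ => key i, Finset.sum_add_distrib,
    Finset.sum_ite_eq' Finset.univ a (fun _ => A + C), Finset.sum_add_distrib,
    Finset.sum_ite_eq' Finset.univ b (fun _ => B + C), Finset.sum_const,
    Finset.card_univ, Fintype.card_fin, nsmul_eq_mul, hcast, one_mul]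
  simp only [Finset.mem_univ, if_true]
  -- (A + C) + ((B + C) + C) = A + B + C
  rw [add_assoc B, CharTwo.add_self_eq_zero, add_zero]
  ring

lemma sum_indicator_ne (hcast : ((n : ℕ) : ZMod 2) = 1) (a : Fin n) (c : ZMod 2) :
    ∑ i : Fin n, (if i ≠ a then c else 0) = 0 := by
  have : ∀ i : Fin n, (if i ≠ a then c else 0) = (if i = a then 0 else c) := by
    intro i; split_ifs with h1 h2 <;> tauto
  rw [Finset.sum_congr rfl fun i _ => this i, sum_ite_one hcast]

lemma sum_indicator_or (hcast : ((n : ℕ) : ZMod 2) = 1) (a b : Fin n) (hab : a ≠ b)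
    (c : ZMod 2) : ∑ i : Fin n, (if i = a ∨ i = b then c else 0) = 0 := by
  have : ∀ i : Fin n, (if i = a ∨ i = b then c else 0)
      = (if i = a then c else if i = b then c else 0) := by
    intro i; split_ifs <;> tauto
  rw [Finset.sum_congr rfl fun i _ => this i, sum_ite_two hcast a b hab]
  rw [add_zero, CharTwo.add_self_eq_zero]

end Aux

section Psi0
variable {n : ℕ}

lemma psi0_add1 (x x' y z : Fin n → ZMod 2) :
    psi0 (x + x') y z = psi0 x y z + psi0 x' y z := by
  unfold psi0
  rw [← Finset.sum_add_distrib]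
  refine Finset.sum_congr rfl fun i _ => ?_
  rw [← Finset.sum_add_distrib]
  refine Finset.sum_congr rfl fun j _ => ?_
  rw [← Finset.sum_add_distrib]
  refine Finset.sum_congr rfl fun k _ => ?_
  split_ifs
  · rw [Pi.add_apply, add_mul, add_mul]
  · rw [add_zero]

lemma psi0_add2 (x y y' z : Fin n → ZMod 2) :
    psi0 x (y + y') z = psi0 x y z + psi0 x y' z := by
  unfold psi0
  rw [← Finset.sum_add_distrib]
  refine Finset.sum_congr rfl fun i _ => ?_
  rw [← Finset.sum_add_distrib]
  refine Finset.sum_congr rfl fun j _ => ?_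
  rw [← Finset.sum_add_distrib]
  refine Finset.sum_congr rfl fun k _ => ?_
  split_ifs
  · rw [Pi.add_apply, mul_add, add_mul]
  · rw [add_zero]

lemma psi0_add3 (x y z z' : Fin n → ZMod 2) :
    psi0 x y (z + z') = psi0 x y z + psi0 x y z' := by
  unfold psi0
  rw [← Finset.sum_add_distrib]
  refine Finset.sum_congr rfl fun i _ => ?_
  rw [← Finset.sum_add_distrib]
  refine Finset.sum_congr rfl fun j _ => ?_
  rw [← Finset.sum_add_distrib]
  refine Finset.sum_congr rfl fun k _ => ?_
  split_ifs
  · rw [Pi.add_apply, mul_add]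
  · rw [add_zero]

lemma psi0_one1 (hcast : ((n : ℕ) : ZMod 2) = 1) (y z : Fin n → ZMod 2) :
    psi0 (fun _ => 1) y z = 0 := by
  unfold psi0
  rw [Finset.sum_comm]
  refine Finset.sum_eq_zero fun j _ => ?_
  rw [Finset.sum_comm]
  refine Finset.sum_eq_zero fun k _ => ?_
  simp only [one_mul]
  by_cases h : j = k
  · calc ∑ i : Fin n, (if exactlyTwo i j k then y j * z k else 0)
        = ∑ i : Fin n, (if i ≠ j then y j * z k else 0) := by
          refine Finset.sum_congr rfl fun i _ => ?_
          rw [if_congr ((exactlyTwo_iff1 i j k).trans (by rw [if_pos h])) rfl rfl]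
      _ = 0 := sum_indicator_ne hcast j _
  · calc ∑ i : Fin n, (if exactlyTwo i j k then y j * z k else 0)
        = ∑ i : Fin n, (if i = j ∨ i = k then y j * z k else 0) := by
          refine Finset.sum_congr rfl fun i _ => ?_
          rw [if_congr ((exactlyTwo_iff1 i j k).trans (by rw [if_neg h])) rfl rfl]
      _ = 0 := sum_indicator_or hcast j k h _

lemma psi0_one2 (hcast : ((n : ℕ) : ZMod 2) = 1) (x z : Fin n → ZMod 2) :
    psi0 x (fun _ => 1) z = 0 := by
  unfold psi0
  refine Finset.sum_eq_zero fun i _ => ?_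
  rw [Finset.sum_comm]
  refine Finset.sum_eq_zero fun k _ => ?_
  simp only [mul_one]
  by_cases h : i = k
  · calc ∑ j : Fin n, (if exactlyTwo i j k then x i * z k else 0)
        = ∑ j : Fin n, (if j ≠ i then x i * z k else 0) := by
          refine Finset.sum_congr rfl fun j _ => ?_
          rw [if_congr ((exactlyTwo_iff2 i j k).trans (by rw [if_pos h])) rfl rfl]
      _ = 0 := sum_indicator_ne hcast i _
  · calc ∑ j : Fin n, (if exactlyTwo i j k then x i * z k else 0)
        = ∑ j : Fin n, (if j = i ∨ j = k then x i * z k else 0) := by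
          refine Finset.sum_congr rfl fun j _ => ?_
          rw [if_congr ((exactlyTwo_iff2 i j k).trans (by rw [if_neg h])) rfl rfl]
      _ = 0 := sum_indicator_or hcast i k h _

lemma psi0_one3 (hcast : ((n : ℕ) : ZMod 2) = 1) (x y : Fin n → ZMod 2) :
    psi0 x y (fun _ => 1) = 0 := by
  unfold psi0
  refine Finset.sum_eq_zero fun i _ => ?_
  refine Finset.sum_eq_zero fun j _ => ?_
  simp only [mul_one]
  by_cases h : i = j
  · calc ∑ k : Fin n, (if exactlyTwo i j k then x i * y j else 0)
        = ∑ k : Fin n, (if k ≠ i then x i * y j else 0) := by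
          refine Finset.sum_congr rfl fun k _ => ?_
          rw [if_congr ((exactlyTwo_iff3 i j k).trans (by rw [if_pos h])) rfl rfl]
      _ = 0 := sum_indicator_ne hcast i _
  · calc ∑ k : Fin n, (if exactlyTwo i j k then x i * y j else 0)
        = ∑ k : Fin n, (if k = i ∨ k = j then x i * y j else 0) := by
          refine Finset.sum_congr rfl fun k _ => ?_
          rw [if_congr ((exactlyTwo_iff3 i j k).trans (by rw [if_neg h])) rfl rfl]
      _ = 0 := sum_indicator_or hcast i j h _

lemma exactlyTwo_perm (σ : Equiv.Perm (Fin n)) (i j k : Fin n) :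
    exactlyTwo i j k ↔ exactlyTwo (σ i) (σ j) (σ k) := by
  unfold exactlyTwo
  simp [EmbeddingLike.apply_eq_iff_eq]

lemma psi0_perm (σ : Equiv.Perm (Fin n)) (x y z : Fin n → ZMod 2) :
    psi0 (x ∘ σ) (y ∘ σ) (z ∘ σ) = psi0 x y z := by
  unfold psi0
  refine Fintype.sum_equiv σ _ _ fun i => ?_
  refine Fintype.sum_equiv σ _ _ fun j => ?_
  refine Fintype.sum_equiv σ _ _ fun k => ?_
  exact if_congr (exactlyTwo_perm σ i j k) rfl rfl

lemma exists_perm {n : ℕ} (i j k i' j' k' : Fin n) (h1 : i = j ↔ i' = j')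
    (h2 : i = k ↔ i' = k') (h3 : j = k ↔ j' = k') :
    ∃ σ : Equiv.Perm (Fin n), σ i' = i ∧ σ j' = j ∧ σ k' = k := by
  classical
  set σ1 := Equiv.swap i i' with hσ1
  have hσ1i' : σ1 i' = i := Equiv.swap_apply_right i i'
  set b := σ1 j' with hb
  set σ2 := Equiv.swap j b with hσ2
  have hσ2b : σ2 b = j := Equiv.swap_apply_right j b
  have hs2i : σ2 i = i := by
    by_cases hji : j = i
    · have hb' : b = i := by rw [hb, ← h1.mp hji.symm, hσ1i']
      rw [hσ2, hji, hb', Equiv.swap_self, Equiv.refl_apply]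
    · have hbi : b ≠ i := by
        intro h
        apply hji
        have e1 : σ1 j' = σ1 i' := by rw [← hb, h, hσ1i']
        exact (h1.mpr (σ1.injective e1).symm).symm
      rw [hσ2]
      exact Equiv.swap_apply_of_ne_of_ne (fun h => hji h.symm) (fun h => hbi h.symm)
  have hi2 : σ2 (σ1 i') = i := by rw [hσ1i', hs2i]
  set c := σ2 (σ1 k') with hc
  set σ3 := Equiv.swap k c with hσ3
  have hσ3c : σ3 c = k := Equiv.swap_apply_right k c
  have hj2 : σ2 (σ1 j') = j := by rw [← hb, hσ2b]
  have hs3i : σ3 i = i := by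
    by_cases hki : k = i
    · have hci : c = i := by rw [hc, (h2.mp hki.symm).symm, hi2]
      rw [hσ3, hki, hci, Equiv.swap_self, Equiv.refl_apply]
    · have hci : c ≠ i := by
        intro h
        apply hki
        have e1 : σ2 (σ1 k') = σ2 (σ1 i') := by rw [← hc, h, hi2]
        exact (h2.mpr (σ1.injective (σ2.injective e1)).symm).symm
      rw [hσ3]
      exact Equiv.swap_apply_of_ne_of_ne (fun h => hki h.symm) (fun h => hci h.symm)
  have hs3j : σ3 j = j := by
    by_cases hkj : k = j
    · have hcj : c = j := by rw [hc, (h3.mp hkj.symm).symm, hj2]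
      rw [hσ3, hkj, hcj, Equiv.swap_self, Equiv.refl_apply]
    · have hcj : c ≠ j := by
        intro h
        apply hkj
        have e1 : σ2 (σ1 k') = σ2 (σ1 j') := by rw [← hc, h, hj2]
        exact (h3.mpr (σ1.injective (σ2.injective e1)).symm).symm
      rw [hσ3]
      exact Equiv.swap_apply_of_ne_of_ne (fun h => hkj h.symm) (fun h => hcj h.symm)
  refine ⟨σ3 * σ2 * σ1, ?_, ?_, ?_⟩
  · simp only [Equiv.Perm.mul_apply]
    rw [hσ1i', hs2i, hs3i]
  · simp only [Equiv.Perm.mul_apply]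
    rw [hj2, hs3j]
  · simp only [Equiv.Perm.mul_apply]
    rw [← hc, hσ3c]


end Psi0

/-- The basis vectors of the permutation module. -/
def eb {n : ℕ} (i : Fin n) : Fin n → ZMod 2 := Pi.single i 1

lemma eb_comp {n : ℕ} (σ : Equiv.Perm (Fin n)) (i i' : Fin n) (h : σ i' = i) :
    eb i ∘ σ = eb i' := by
  funext m
  simp only [eb, Function.comp_apply, Pi.single_apply]
  exact if_congr ⟨fun hm => σ.injective (hm.trans h.symm), fun hm => hm ▸ h⟩ rfl rfl

lemma classify {n : ℕ} (hcast : ((n : ℕ) : ZMod 2) = 1) (h3 : 3 ≤ n)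
    (ψ : (Fin n → ZMod 2) → (Fin n → ZMod 2) → (Fin n → ZMod 2) → ZMod 2)
    (hψ : IsInvTrilinear n ψ) :
    (∀ x y z, ψ x y z = 0) ∨ (∀ x y z, ψ x y z = psi0 x y z) := by
  obtain ⟨hA1, hA2, hA3, hO1, hO2, hO3, hP⟩ := hψ
  -- pattern invariance
  have patt : ∀ i j k i' j' k' : Fin n, (i = j ↔ i' = j') → (i = k ↔ i' = k') →
      (j = k ↔ j' = k') → ψ (eb i') (eb j') (eb k') = ψ (eb i) (eb j) (eb k) := by
    intro i j k i' j' k' h1 h2 h3'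
    obtain ⟨σ, hi, hj, hk⟩ := exists_perm i j k i' j' k' h1 h2 h3'
    have := hP σ (eb i) (eb j) (eb k)
    rwa [eb_comp σ i i' hi, eb_comp σ j j' hj, eb_comp σ k k' hk] at this
  have ones_eq : (∑ i : Fin n, eb i) = (fun _ => (1 : ZMod 2)) := by
    unfold eb
    exact Finset.univ_sum_single (fun _ => (1 : ZMod 2))
  have hone1 : ∀ y z, ψ (fun _ => 1) y z = 0 := fun y z => congrFun (congrFun hO1 y) z
  -- sums of ψ over basis in each slot vanish
  have hbsum1 : ∀ y z : Fin n → ZMod 2, ∑ i, ψ (eb i) y z = 0 := by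
    intro y z
    have h := (map_sum (AddMonoidHom.mk' (fun x => ψ x y z) (fun a b => hA1 a b y z))
      eb Finset.univ).symm
    rw [ones_eq] at h
    exact h.trans (hone1 y z)
  have hbsum2 : ∀ x z : Fin n → ZMod 2, ∑ j, ψ x (eb j) z = 0 := by
    intro x z
    have h := (map_sum (AddMonoidHom.mk' (fun y => ψ x y z) (fun a b => hA2 x a b z))
      eb Finset.univ).symm
    rw [ones_eq] at h
    exact h.trans (hO2 x z)
  have hbsum3 : ∀ x y : Fin n → ZMod 2, ∑ k, ψ x y (eb k) = 0 := by
    intro x y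
    have h := (map_sum (AddMonoidHom.mk' (fun z => ψ x y z) (fun a b => hA3 x y a b))
      eb Finset.univ).symm
    rw [ones_eq] at h
    exact h.trans (hO3 x y)
  -- reference indices
  have hn0 : 0 < n := by omega
  have hn1 : 1 < n := by omega
  have hn2 : 2 < n := by omega
  set z0 : Fin n := ⟨0, hn0⟩ with hz0
  set z1 : Fin n := ⟨1, hn1⟩ with hz1
  set z2 : Fin n := ⟨2, hn2⟩ with hz2
  have h01 : z0 ≠ z1 := by simp [hz0, hz1, Fin.ext_iff]
  have h02 : z0 ≠ z2 := by simp [hz0, hz2, Fin.ext_iff]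
  have h12 : z1 ≠ z2 := by simp [hz1, hz2, Fin.ext_iff]
  set A := ψ (eb z0) (eb z0) (eb z0) with hA
  set B := ψ (eb z0) (eb z0) (eb z1) with hB
  set C := ψ (eb z0) (eb z1) (eb z0) with hC
  set D := ψ (eb z1) (eb z0) (eb z0) with hD
  set E := ψ (eb z0) (eb z1) (eb z2) with hE
  have val : ∀ i j k : Fin n, ψ (eb i) (eb j) (eb k) =
      if i = j then (if i = k then A else B)
      else if i = k then C else if j = k then D else E := by
    intro i j k
    by_cases hij : i = j <;> by_cases hik : i = k <;> by_cases hjk : j = k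
    · rw [if_pos hij, if_pos hik]
      exact patt z0 z0 z0 i j k (iff_of_true rfl hij) (iff_of_true rfl hik)
        (iff_of_true rfl hjk)
    · exact absurd (hij.symm.trans hik) hjk
    · exact absurd (hij.trans hjk) hik
    · rw [if_pos hij, if_neg hik]
      exact patt z0 z0 z1 i j k (iff_of_true rfl hij) (iff_of_false h01 hik)
        (iff_of_false h01 hjk)
    · exact absurd (hik.trans hjk.symm) hij
    · rw [if_neg hij, if_pos hik]
      exact patt z0 z1 z0 i j k (iff_of_false h01 hij) (iff_of_true rfl hik)
        (iff_of_false (Ne.symm h01) hjk)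
    · rw [if_neg hij, if_neg hik, if_pos hjk]
      exact patt z1 z0 z0 i j k (iff_of_false (Ne.symm h01) hij) (iff_of_false (Ne.symm h01) hik)
        (iff_of_true rfl hjk)
    · rw [if_neg hij, if_neg hik, if_neg hjk]
      exact patt z0 z1 z2 i j k (iff_of_false h01 hij) (iff_of_false h02 hik)
        (iff_of_false h12 hjk)
  -- constraints
  have eqA : A = 0 := by
    have h0 := hbsum1 (eb z0) (eb z0)
    rw [Finset.sum_congr rfl (fun i _ => (val i z0 z0).trans ?_),
      sum_ite_one hcast] at h0
    · exact h0
    · show _ = if i = z0 then A else D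
      by_cases h : i = z0 <;> simp [h]
  have eq1 : B + C + E = 0 := by
    have h1 := hbsum1 (eb z0) (eb z1)
    rw [Finset.sum_congr rfl (fun i _ => (val i z0 z1).trans ?_),
      sum_ite_two hcast z0 z1 h01] at h1
    · exact h1
    · show _ = if i = z0 then B else if i = z1 then C else E
      by_cases h : i = z0 <;> by_cases h' : i = z1
      · exact absurd (h.symm.trans h') h01
      · simp [h, h', h01, Ne.symm h01]
      · simp [h, h', h01, Ne.symm h01]
      · simp [h, h', h01, Ne.symm h01, Ne.symm h, Ne.symm h']
  have eq2 : B + D + E = 0 := by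
    have h1 := hbsum2 (eb z0) (eb z1)
    rw [Finset.sum_congr rfl (fun j _ => (val z0 j z1).trans ?_),
      sum_ite_two hcast z0 z1 h01] at h1
    · exact h1
    · show _ = if j = z0 then B else if j = z1 then D else E
      by_cases h : j = z0 <;> by_cases h' : j = z1
      · exact absurd (h.symm.trans h') h01
      · simp [h, h', h01, Ne.symm h01]
      · simp [h, h', h01, Ne.symm h01, Ne.symm h]
      · simp [h, h', h01, Ne.symm h01, Ne.symm h, Ne.symm h']
  have eq3 : C + D + E = 0 := by
    have h1 := hbsum3 (eb z0) (eb z1)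
    rw [Finset.sum_congr rfl (fun k _ => (val z0 z1 k).trans ?_),
      sum_ite_two hcast z0 z1 h01] at h1
    · exact h1
    · show _ = if k = z0 then C else if k = z1 then D else E
      by_cases h : k = z0 <;> by_cases h' : k = z1
      · exact absurd (h.symm.trans h') h01
      · simp [h, h', h01, Ne.symm h01, Ne.symm h']
      · simp [h, h', h01, Ne.symm h01, Ne.symm h]
      · simp [h, h', h01, Ne.symm h01, Ne.symm h, Ne.symm h']
  have key : ∀ b c d ee : ZMod 2, b + c + ee = 0 → b + d + ee = 0 → c + d + ee = 0 →
      c = b ∧ d = b ∧ ee = 0 := by decide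
  obtain ⟨hCB, hDB, hE0⟩ := key B C D E eq1 eq2 eq3
  -- values on basis vectors
  have valB : ∀ i j k : Fin n, ψ (eb i) (eb j) (eb k) =
      if exactlyTwo i j k then B else 0 := by
    intro i j k
    rw [val i j k]
    by_cases hij : i = j <;> by_cases hik : i = k <;> by_cases hjk : j = k
    · simp [exactlyTwo, hij, hik, hjk, eqA]
    · exact absurd (hij.symm.trans hik) hjk
    · exact absurd (hij.trans hjk) hik
    · simp [exactlyTwo, hij, hik, hjk, eqA, Ne.symm hik, Ne.symm hjk]
    · exact absurd (hik.trans hjk.symm) hij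
    · simp [exactlyTwo, hij, hik, hjk, hCB, Ne.symm hij, Ne.symm hjk]
    · simp [exactlyTwo, hij, hik, hjk, hDB, Ne.symm hij, Ne.symm hik]
    · simp [exactlyTwo, hij, hik, hjk, hE0, Ne.symm hij, Ne.symm hik, Ne.symm hjk]
  -- expansion over the basis
  have zero1 : ∀ y z, ψ 0 y z = 0 := fun y z =>
    (AddMonoidHom.mk' (fun x => ψ x y z) (fun a b => hA1 a b y z)).map_zero
  have zero2 : ∀ x z, ψ x 0 z = 0 := fun x z =>
    (AddMonoidHom.mk' (fun y => ψ x y z) (fun a b => hA2 x a b z)).map_zero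
  have zero3 : ∀ x y, ψ x y 0 = 0 := fun x y =>
    (AddMonoidHom.mk' (fun z => ψ x y z) (fun a b => hA3 x y a b)).map_zero
  have scale1 : ∀ (i : Fin n) (c : ZMod 2) (y z), ψ (Pi.single i c) y z = c * ψ (eb i) y z := by
    intro i c y z
    rcases two_cases c with h | h <;> subst h
    · rw [Pi.single_zero, zero_mul]; exact zero1 y z
    · rw [one_mul]; rfl
  have scale2 : ∀ (x) (j : Fin n) (c : ZMod 2) (z), ψ x (Pi.single j c) z = c * ψ x (eb j) z := by
    intro x j c z
    rcases two_cases c with h | h <;> subst h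
    · rw [Pi.single_zero, zero_mul]; exact zero2 x z
    · rw [one_mul]; rfl
  have scale3 : ∀ (x y) (k : Fin n) (c : ZMod 2), ψ x y (Pi.single k c) = c * ψ x y (eb k) := by
    intro x y k c
    rcases two_cases c with h | h <;> subst h
    · rw [Pi.single_zero, zero_mul]; exact zero3 x y
    · rw [one_mul]; rfl
  have exp1 : ∀ x y z, ψ x y z = ∑ i, x i * ψ (eb i) y z := by
    intro x y z
    conv_lhs => rw [← Finset.univ_sum_single x]
    exact (map_sum (AddMonoidHom.mk' (fun x => ψ x y z) (fun a b => hA1 a b y z))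
      (fun i => Pi.single i (x i)) Finset.univ).trans
      (Finset.sum_congr rfl fun i _ => scale1 i (x i) y z)
  have exp2 : ∀ x y z, ψ x y z = ∑ j, y j * ψ x (eb j) z := by
    intro x y z
    conv_lhs => rw [← Finset.univ_sum_single y]
    exact (map_sum (AddMonoidHom.mk' (fun y => ψ x y z) (fun a b => hA2 x a b z))
      (fun j => Pi.single j (y j)) Finset.univ).trans
      (Finset.sum_congr rfl fun j _ => scale2 x j (y j) z)
  have exp3 : ∀ x y z, ψ x y z = ∑ k, z k * ψ x y (eb k) := by
    intro x y z
    conv_lhs => rw [← Finset.univ_sum_single z]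
    exact (map_sum (AddMonoidHom.mk' (fun z => ψ x y z) (fun a b => hA3 x y a b))
      (fun k => Pi.single k (z k)) Finset.univ).trans
      (Finset.sum_congr rfl fun k _ => scale3 x y k (z k))
  have final : ∀ x y z, ψ x y z = B * psi0 x y z := by
    intro x y z
    rw [exp1 x y z]
    unfold psi0
    rw [Finset.mul_sum]
    refine Finset.sum_congr rfl fun i _ => ?_
    rw [exp2 (eb i) y z, Finset.mul_sum, Finset.mul_sum]
    refine Finset.sum_congr rfl fun j _ => ?_
    rw [exp3 (eb i) (eb j) z, Finset.mul_sum, Finset.mul_sum, Finset.mul_sum]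
    refine Finset.sum_congr rfl fun k _ => ?_
    rw [valB i j k]
    split_ifs
    · ring
    · ring
  rcases two_cases B with h | h
  · left
    intro x y z
    rw [final x y z, h, zero_mul]
  · right
    intro x y z
    rw [final x y z, h, one_mul]


/-- For `g ≥ 3`, the space of `S_{2g+1}`-invariant linear maps `H^{⊗3} → 𝔽₂` is
one-dimensional, spanned by `ψ₀`. -/
theorem stmt10 (g : ℕ) (hg : 3 ≤ g) :
    IsInvTrilinear (2 * g + 1) psi0 ∧
    ∀ ψ, IsInvTrilinear (2 * g + 1) ψ →
      (∀ x y z, ψ x y z = 0) ∨ (∀ x y z, ψ x y z = psi0 x y z) := by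
  have hcast : ((2 * g + 1 : ℕ) : ZMod 2) = 1 := by
    push_cast
    rw [show (2 : ZMod 2) = 0 from by decide, zero_mul, zero_add]
  constructor
  · refine ⟨psi0_add1, psi0_add2, psi0_add3, ?_, fun x z => psi0_one2 hcast x z,
      fun x y => psi0_one3 hcast x y, fun σ x y z => psi0_perm σ x y z⟩
    funext y z
    exact psi0_one1 hcast y z
  · intro ψ hψ
    exact classify hcast (by omega) ψ hψ
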